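/- As P → ∞, P^M · Pout(P) converges to εs^M; that is, in the high SNR regime with equal powers P0 = Ps = P, the HSIC-PA outage probability satisfies Pout(P) ~ εs^M/P^M. -/

import Mathlib

open MeasureTheory ProbabilityTheory Real Filter

/-- The interference threshold `τ(g) = max{0, g/α₀ − 1}`. -/
noncomputable def tau (α0 g : ℝ) : ℝ := max 0 (g / α0 - 1)

/-- The HSIC-PA achievable rate of a secondary user with channel gain `h`,
given the primary channel gain `g`. -/
noncomputable def rateHSIC (P0 Ps α0 h g : ℝ) : ℝ :=
  if Ps * h ≤ tau α0 g then Real.logb 2 (1 + Ps * h)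
  else max (Real.logb 2 (1 + Ps * h / (P0 * g + 1))) (Real.logb 2 (1 + tau α0 g))

/-- The HSIC-PA overall outage probability with equal powers `P0 = Ps = P`, realized on
the canonical probability space carrying `M + 1` i.i.d. rate-one exponential random
variables: coordinate `0` is the primary channel gain `G = |g|²` and coordinates
`1, …, M` are the secondary channel gains `H₁, …, H_M`. -/
noncomputable def outageHSIC (M : ℕ) (R0 Rs P : ℝ) : ℝ :=
  haveI : IsProbabilityMeasure (expMeasure 1) := isProbabilityMeasure_expMeasure one_pos
  ((Measure.pi fun _ : Fin (M + 1) => expMeasure 1)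
    {ω | (⨆ m : Fin M, rateHSIC P P ((2 ^ R0 - 1) / P) (ω m.succ) (ω 0)) < Rs}).toReal

open Set

/-! ### Auxiliary lemmas -/

lemma expMeasure_Iio' {r : ℝ} (hr : 0 < r) (x : ℝ) :
    expMeasure r (Iio x) = ENNReal.ofReal (if 0 ≤ x then 1 - Real.exp (-(r*x)) else 0) := by
  rw [expMeasure, gammaMeasure, withDensity_apply _ measurableSet_Iio,
    Measure.restrict_congr_set Iio_ae_eq_Iic]
  exact lintegral_exponentialPDF_eq_antiDeriv hr x

lemma pi_prod_meas (M : ℕ) (s0 s1 : Set ℝ) :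
    haveI : IsProbabilityMeasure (expMeasure 1) := isProbabilityMeasure_expMeasure one_pos
    (Measure.pi fun _ : Fin (M + 1) => expMeasure 1)
      {ω | ω 0 ∈ s0 ∧ ∀ m : Fin M, ω m.succ ∈ s1}
      = expMeasure 1 s0 * (expMeasure 1 s1) ^ M := by
  haveI : IsProbabilityMeasure (expMeasure 1) := isProbabilityMeasure_expMeasure one_pos
  have hset : {ω : Fin (M+1) → ℝ | ω 0 ∈ s0 ∧ ∀ m : Fin M, ω m.succ ∈ s1}
      = Set.pi univ (fun i => if i = 0 then s0 else s1) := by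
    ext ω
    simp only [Set.mem_pi, Set.mem_univ, forall_true_left, Set.mem_setOf_eq]
    constructor
    · rintro ⟨h0', h1'⟩ i
      induction i using Fin.cases with
      | zero => simpa using h0'
      | succ m => simpa [Fin.succ_ne_zero m] using h1' m
    · intro h
      refine ⟨by simpa using h 0, fun m => by simpa [Fin.succ_ne_zero m] using h m.succ⟩
  rw [hset, Measure.pi_pi, Fin.prod_univ_succ]
  simp [Fin.succ_ne_zero]

lemma fin_sup_lt_iff {M : ℕ} (hM : 0 < M) (f : Fin M → ℝ) (r : ℝ) :
    (⨆ m, f m) < r ↔ ∀ m, f m < r := by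
  haveI : Nonempty (Fin M) := ⟨⟨0, hM⟩⟩
  constructor
  · intro h m
    exact lt_of_le_of_lt (le_ciSup (Set.Finite.bddAbove (Set.finite_range f)) m) h
  · intro h
    obtain ⟨m0, hm0⟩ := Finite.exists_max f
    exact lt_of_le_of_lt (ciSup_le hm0) (h m0)

section pointwise
variable {P ε0 εs Rs g h : ℝ}

lemma rate_lt_of_lt (hP : 0 < P) (hεs : 0 < εs) (hRs : Rs = Real.logb 2 (1 + εs))
    (hg : 0 ≤ g) (hh : 0 ≤ h) (h1 : P * h < εs) : rateHSIC P P (ε0/P) h g < Rs := by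
  have hPh : 0 ≤ P * h := mul_nonneg hP.le hh
  have hPg1 : (1:ℝ) ≤ P * g + 1 := by nlinarith
  rw [rateHSIC, hRs]
  split_ifs with hle
  · exact logb_lt_logb one_lt_two (by linarith) (by linarith)
  · push_neg at hle
    refine max_lt ?_ ?_
    · have : P * h / (P * g + 1) ≤ P * h := div_le_self hPh hPg1
      exact logb_lt_logb one_lt_two (by positivity) (by linarith)
    · have htau : 0 ≤ tau (ε0/P) g := le_max_left _ _
      exact logb_lt_logb one_lt_two (by linarith) (by linarith)

lemma lt_of_rate_lt_far (hP : 0 < P) (hε0 : 0 < ε0) (hεs : 0 < εs)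
    (hRs : Rs = Real.logb 2 (1 + εs)) (hh : 0 ≤ h)
    (hgf : ε0 * (1 + εs) / P ≤ g) (hr : rateHSIC P P (ε0/P) h g < Rs) :
    P * h < εs := by
  have hPh : 0 ≤ P * h := mul_nonneg hP.le hh
  have htau : εs ≤ tau (ε0/P) g := by
    have : (1 + εs) ≤ g / (ε0 / P) := by
      rw [div_div_eq_mul_div, le_div_iff₀ hε0]
      calc (1 + εs) * ε0 = (ε0 * (1+εs) / P) * P := by field_simp
        _ ≤ g * P := by exact mul_le_mul_of_nonneg_right hgf hP.le
    calc εs ≤ g / (ε0/P) - 1 := by linarith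
      _ ≤ tau (ε0/P) g := le_max_right _ _
  rw [rateHSIC, hRs] at hr
  split_ifs at hr with hle
  · have := (logb_lt_logb_iff one_lt_two (by linarith) (by linarith)).mp hr
    linarith
  · exfalso
    have h2 := (max_lt_iff.mp hr).2
    have := (logb_lt_logb_iff one_lt_two (by linarith) (by linarith)).mp h2
    linarith

lemma lt_of_rate_lt_near (hP : 0 < P) (hεs : 0 < εs) (hRs : Rs = Real.logb 2 (1 + εs))
    (hg : 0 ≤ g) (hh : 0 ≤ h) (hr : rateHSIC P P (ε0/P) h g < Rs) :
    P * h < εs * (P * g + 1) := by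
  have hPh : 0 ≤ P * h := mul_nonneg hP.le hh
  have hPg1 : (0:ℝ) < P * g + 1 := by nlinarith
  rw [rateHSIC, hRs] at hr
  split_ifs at hr with hle
  · have := (logb_lt_logb_iff one_lt_two (by linarith) (by linarith)).mp hr
    nlinarith [mul_nonneg hεs.le (mul_nonneg hP.le hg)]
  · have h1 := (max_lt_iff.mp hr).1
    have hq : 0 ≤ P * h / (P * g + 1) := div_nonneg hPh hPg1.le
    have := (logb_lt_logb_iff one_lt_two (by linarith) (by linarith)).mp h1
    have := (div_lt_iff₀ hPg1).mp (by linarith : P * h / (P * g + 1) < εs)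
    linarith

end pointwise

lemma outage_bounds (M : ℕ) (hM : 1 ≤ M) (R0 Rs : ℝ) (hR0 : 0 < R0) (hRs : 0 < Rs)
    (P : ℝ) (hP : 0 < P) :
    (1 - Real.exp (-((2^Rs-1)/P)))^M ≤ outageHSIC M R0 Rs P ∧
    outageHSIC M R0 Rs P ≤ (1 - Real.exp (-((2^Rs-1)/P)))^M
      + (1 - Real.exp (-((2^R0-1)*(1+(2^Rs-1))/P)))
        * (1 - Real.exp (-((2^Rs-1)*((2^R0-1)*(1+(2^Rs-1))+1)/P)))^M := by
  haveI : IsProbabilityMeasure (expMeasure 1) := isProbabilityMeasure_expMeasure one_pos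
  set ε0 : ℝ := 2^R0 - 1 with hε0def
  set εs : ℝ := 2^Rs - 1 with hεsdef
  have hε0 : 0 < ε0 := by
    have : (1:ℝ) < 2 ^ R0 :=
      (Real.one_lt_rpow_iff_of_pos (by norm_num)).mpr (Or.inl ⟨one_lt_two, hR0⟩)
    simp [hε0def]; linarith
  have hεs : 0 < εs := by
    have : (1:ℝ) < 2 ^ Rs :=
      (Real.one_lt_rpow_iff_of_pos (by norm_num)).mpr (Or.inl ⟨one_lt_two, hRs⟩)
    simp [hεsdef]; linarith
  have hRs' : Rs = Real.logb 2 (1 + εs) := by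
    rw [hεsdef]; ring_nf
    rw [Real.logb_rpow (by norm_num) (by norm_num)]
  set μ := (Measure.pi fun _ : Fin (M + 1) => expMeasure 1) with hμdef
  set a : ℝ := εs / P with hadef
  set gs : ℝ := ε0 * (1 + εs) / P with hgsdef
  set b : ℝ := εs * (ε0 * (1 + εs) + 1) / P with hbdef
  have ha : 0 < a := by positivity
  have hgs : 0 < gs := by positivity
  have hb : 0 < b := by positivity
  set E := {ω : Fin (M+1) → ℝ | (⨆ m : Fin M, rateHSIC P P (ε0 / P) (ω m.succ) (ω 0)) < Rs}
    with hEdef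
  set A := {ω : Fin (M+1) → ℝ | ω 0 ∈ (univ : Set ℝ) ∧ ∀ m : Fin M, ω m.succ ∈ Iio a} with hAdef
  set B := {ω : Fin (M+1) → ℝ | ω 0 ∈ Iio gs ∧ ∀ m : Fin M, ω m.succ ∈ Iio b} with hBdef
  set N := ⋃ i : Fin (M+1), (fun ω : Fin (M+1) → ℝ => ω i) ⁻¹' (Iio 0) with hNdef
  have hN : μ N = 0 := by
    refine measure_iUnion_null fun i => Measure.pi_eval_preimage_null _ ?_
    rw [expMeasure_Iio' one_pos 0]
    simp
  have hMpos : 0 < M := hM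
  have hAE : A ⊆ E ∪ N := by
    intro ω hω
    by_cases hωN : ω ∈ N
    · exact Or.inr hωN
    · left
      have hpos : ∀ i, 0 ≤ ω i := by
        intro i
        by_contra hlt
        exact hωN (Set.mem_iUnion.mpr ⟨i, by simpa using lt_of_not_ge hlt⟩)
      rw [hEdef, Set.mem_setOf_eq, fin_sup_lt_iff hMpos]
      intro m
      refine rate_lt_of_lt hP hεs hRs' (hpos 0) (hpos m.succ) ?_
      have := hω.2 m
      rw [Set.mem_Iio, hadef, lt_div_iff₀ hP] at this
      linarith [this]
  have hEAB : E ⊆ (A ∪ B) ∪ N := by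
    intro ω hω
    by_cases hωN : ω ∈ N
    · exact Or.inr hωN
    · left
      have hpos : ∀ i, 0 ≤ ω i := by
        intro i
        by_contra hlt
        exact hωN (Set.mem_iUnion.mpr ⟨i, by simpa using lt_of_not_ge hlt⟩)
      rw [hEdef, Set.mem_setOf_eq, fin_sup_lt_iff hMpos] at hω
      by_cases hgcase : gs ≤ ω 0
      · refine Or.inl ⟨Set.mem_univ _, fun m => ?_⟩
        have := lt_of_rate_lt_far hP hε0 hεs hRs' (hpos m.succ) hgcase (hω m)
        rw [Set.mem_Iio, hadef, lt_div_iff₀ hP]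
        linarith
      · push_neg at hgcase
        refine Or.inr ⟨hgcase, fun m => ?_⟩
        have h1 := lt_of_rate_lt_near hP hεs hRs' (hpos 0) (hpos m.succ) (hω m)
        have h2 : εs * (P * ω 0 + 1) < εs * (ε0 * (1 + εs) + 1) := by
          have : P * ω 0 < ε0 * (1 + εs) := by
            have := (lt_div_iff₀ hP).mp hgcase
            linarith
          nlinarith
        rw [Set.mem_Iio, hbdef, lt_div_iff₀ hP]
        nlinarith
  have hmA : μ A = ENNReal.ofReal (1 - Real.exp (-a)) ^ M := by
    rw [hAdef, hμdef, pi_prod_meas, expMeasure_Iio' one_pos a, if_pos ha.le, one_mul]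
    simp
  have hmB : μ B
      = ENNReal.ofReal (1 - Real.exp (-gs)) * ENNReal.ofReal (1 - Real.exp (-b)) ^ M := by
    rw [hBdef, hμdef, pi_prod_meas, expMeasure_Iio' one_pos, expMeasure_Iio' one_pos,
      if_pos hgs.le, if_pos hb.le]
    simp
  have hout : outageHSIC M R0 Rs P = (μ E).toReal := by
    rw [outageHSIC]
  have hlow : μ A ≤ μ E := by
    calc μ A ≤ μ (E ∪ N) := measure_mono hAE
      _ ≤ μ E + μ N := measure_union_le _ _
      _ = μ E := by rw [hN, add_zero]
  have hhigh : μ E ≤ μ A + μ B := by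
    calc μ E ≤ μ ((A ∪ B) ∪ N) := measure_mono hEAB
      _ ≤ μ (A ∪ B) + μ N := measure_union_le _ _
      _ = μ (A ∪ B) := by rw [hN, add_zero]
      _ ≤ μ A + μ B := measure_union_le _ _
  have hexp_a : 0 ≤ 1 - Real.exp (-a) := by
    have := Real.exp_le_one_iff.mpr (by linarith : -a ≤ 0); linarith
  have hexp_gs : 0 ≤ 1 - Real.exp (-gs) := by
    have := Real.exp_le_one_iff.mpr (by linarith : -gs ≤ 0); linarith
  have hexp_b : 0 ≤ 1 - Real.exp (-b) := by
    have := Real.exp_le_one_iff.mpr (by linarith : -b ≤ 0); linarith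
  have htA : (μ A).toReal = (1 - Real.exp (-a))^M := by
    rw [hmA, ENNReal.toReal_pow, ENNReal.toReal_ofReal hexp_a]
  have htB : (μ B).toReal = (1 - Real.exp (-gs)) * (1 - Real.exp (-b))^M := by
    rw [hmB, ENNReal.toReal_mul, ENNReal.toReal_pow, ENNReal.toReal_ofReal hexp_gs,
      ENNReal.toReal_ofReal hexp_b]
  constructor
  · rw [hout, ← htA]
    exact ENNReal.toReal_mono (measure_ne_top μ E) hlow
  · rw [hout, ← htA, ← htB, ← ENNReal.toReal_add (measure_ne_top μ A) (measure_ne_top μ B)]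
    exact ENNReal.toReal_mono (by finiteness) hhigh

lemma tendsto_mul_one_sub_exp (a : ℝ) :
    Tendsto (fun P : ℝ => P * (1 - Real.exp (-(a/P)))) atTop (nhds a) := by
  have hderiv : HasDerivAt (fun x : ℝ => 1 - Real.exp (-(a*x))) a 0 := by
    have h := (ProbabilityTheory.hasDerivAt_neg_exp_mul_exp (r := a) (x := 0))
    simp at h
    exact (h.const_add 1).congr_of_eventuallyEq (Filter.Eventually.of_forall fun x => by ring)
  have hslope := hasDerivAt_iff_tendsto_slope.mp hderiv
  have hinv : Tendsto (fun P : ℝ => P⁻¹) atTop (nhdsWithin 0 {(0:ℝ)}ᶜ) :=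
    tendsto_inv_atTop_nhdsGT_zero.mono_right (nhdsWithin_mono _ fun x hx => (Set.mem_Ioi.mp hx).ne')
  have hcomp := hslope.comp hinv
  refine hcomp.congr' ?_
  filter_upwards [eventually_gt_atTop (0:ℝ)] with P hP
  have hP0 : P ≠ 0 := hP.ne'
  simp only [Function.comp_apply, slope_def_field]
  rw [div_eq_mul_inv]
  field_simp
  ring_nf
  simp only [Real.exp_zero]; ring

/-- Corollary 2: in the high SNR regime with equal powers `P0 = Ps = P`,
`P^M · Pout(P) → εs^M`, i.e. `Pout(P) ~ εs^M / P^M`. -/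
theorem hsic_pa_outage_high_snr_limit
    (M : ℕ) (hM : 1 ≤ M) (R0 Rs : ℝ) (hR0 : 0 < R0) (hRs : 0 < Rs)
    (εs : ℝ) (hεs : εs = 2 ^ Rs - 1) :
    Tendsto (fun P : ℝ => P ^ M * outageHSIC M R0 Rs P) atTop (nhds (εs ^ M)) := by
  set ε0 : ℝ := 2^R0 - 1 with hε0def
  set d : ℝ := ε0 * (1 + εs) with hddef
  set c : ℝ := εs * (ε0 * (1 + εs) + 1) with hcdef
  set L : ℝ → ℝ := fun P => (P * (1 - Real.exp (-(εs/P))))^M with hLdef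
  set U : ℝ → ℝ := fun P =>
    L P + (1 - Real.exp (-(d/P))) * (P * (1 - Real.exp (-(c/P))))^M with hUdef
  have hL : Tendsto L atTop (nhds (εs ^ M)) := (tendsto_mul_one_sub_exp εs).pow M
  have hd0 : Tendsto (fun P : ℝ => 1 - Real.exp (-(d/P))) atTop (nhds 0) := by
    have h1 : Tendsto (fun P : ℝ => d / P) atTop (nhds 0) :=
      tendsto_const_nhds.div_atTop tendsto_id
    have h1' : Tendsto (fun P : ℝ => -(d / P)) atTop (nhds 0) := by
      have := h1.neg; rwa [neg_zero] at this
    have h2 : Tendsto (fun P : ℝ => Real.exp (-(d/P))) atTop (nhds 1) := by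
      have := (Real.continuous_exp.tendsto 0).comp h1'
      rwa [Real.exp_zero] at this
    have h3 := (tendsto_const_nhds (x := (1:ℝ)) (f := atTop)).sub h2
    simpa using h3
  have hU : Tendsto U atTop (nhds (εs ^ M)) := by
    have h2 := hd0.mul ((tendsto_mul_one_sub_exp c).pow M)
    rw [zero_mul] at h2
    have := hL.add h2
    simpa using this
  refine tendsto_of_tendsto_of_tendsto_of_le_of_le' hL hU ?_ ?_
  · filter_upwards [eventually_gt_atTop (0:ℝ)] with P hP
    have hb := (outage_bounds M hM R0 Rs hR0 hRs P hP).1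
    rw [← hεs] at hb
    calc L P = P^M * (1 - Real.exp (-(εs/P)))^M := mul_pow _ _ _
      _ ≤ P^M * outageHSIC M R0 Rs P := by
          exact mul_le_mul_of_nonneg_left hb (pow_nonneg hP.le M)
  · filter_upwards [eventually_gt_atTop (0:ℝ)] with P hP
    have hb := (outage_bounds M hM R0 Rs hR0 hRs P hP).2
    rw [← hεs, ← hε0def, ← hddef, ← hcdef] at hb
    calc P^M * outageHSIC M R0 Rs P
        ≤ P^M * ((1 - Real.exp (-(εs/P)))^M
            + (1 - Real.exp (-(d/P))) * (1 - Real.exp (-(c/P)))^M) := by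
          exact mul_le_mul_of_nonneg_left hb (pow_nonneg hP.le M)
      _ = U P := by rw [hUdef, hLdef]; simp only [mul_pow]; ring
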